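/- Let (Ω, ℱ, P) be a probability space, let Q, R : Ω → ℝ be independent, identically distributed measurable functions with 0 < Q ≤ 1 almost surely, and suppose 1/Q is integrable. Let α ∈ ℝ and assume that for every integer k ≥ 1, 2·E[s_k(Q)] ≥ α·E[s_k(Q·R)]. Then 2·E[1/Q] ≥ α·(E[1/Q])², and consequently α ≤ 2/E[1/Q]. -/

import Mathlib

open MeasureTheory ProbabilityTheory Finset Filter

lemma geom_aux {x : ℝ} (hx0 : 0 < x) (hx1 : x ≤ 1) :
    HasSum (fun j : ℕ => (1 - x) ^ j) (1 / x) := by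
  have h := hasSum_geometric_of_lt_one (by linarith : (0:ℝ) ≤ 1 - x)
    (by linarith : 1 - x < 1)
  simpa [one_div] using h

lemma geom_sum_bound {x : ℝ} (hx0 : 0 < x) (hx1 : x ≤ 1) (k : ℕ) :
    ‖∑ j ∈ Finset.range k, (1 - x) ^ j‖ ≤ 1 / x := by
  have hnn : (0:ℝ) ≤ ∑ j ∈ Finset.range k, (1 - x) ^ j :=
    Finset.sum_nonneg fun j _ => pow_nonneg (by linarith) j
  rw [Real.norm_eq_abs, abs_of_nonneg hnn]
  have := Summable.sum_le_tsum (Finset.range k)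
    (fun j _ => pow_nonneg (by linarith : (0:ℝ) ≤ 1 - x) j)
    (geom_aux hx0 hx1).summable
  rwa [(geom_aux hx0 hx1).tsum_eq] at this

lemma geom_sum_tendsto {x : ℝ} (hx0 : 0 < x) (hx1 : x ≤ 1) :
    Tendsto (fun k => ∑ j ∈ Finset.range k, (1 - x) ^ j) atTop (nhds (1 / x)) :=
  (geom_aux hx0 hx1).tendsto_sum_nat

/-- For `Q, R` i.i.d. with `0 < Q ≤ 1` a.s. and `1/Q` integrable, if
`2 E[s_k(Q)] ≥ α E[s_k(QR)]` for every `k ≥ 1`, then `2 E[1/Q] ≥ α (E[1/Q])²` and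
`α ≤ 2 / E[1/Q]`. -/
theorem alpha_bound_integrable_case {Ω : Type*} [MeasurableSpace Ω]
    (P : Measure Ω) [IsProbabilityMeasure P]
    (Q R : Ω → ℝ) (hQ : Measurable Q) (hR : Measurable R)
    (hindep : IndepFun Q R P) (hid : IdentDistrib Q R P P)
    (hQ0 : ∀ᵐ ω ∂P, 0 < Q ω) (hQ1 : ∀ᵐ ω ∂P, Q ω ≤ 1)
    (hint : Integrable (fun ω => 1 / Q ω) P)
    (α : ℝ)
    (hineq : ∀ k : ℕ, 1 ≤ k →
      2 * (∫ ω, (∑ j ∈ Finset.range k, (1 - Q ω) ^ j) ∂P) ≥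
        α * (∫ ω, (∑ j ∈ Finset.range k, (1 - Q ω * R ω) ^ j) ∂P)) :
    2 * (∫ ω, 1 / Q ω ∂P) ≥ α * (∫ ω, 1 / Q ω ∂P) ^ 2 ∧
      α ≤ 2 / (∫ ω, 1 / Q ω ∂P) := by
  -- a.e. facts for R
  have hR0 : ∀ᵐ ω ∂P, 0 < R ω :=
    hid.ae_snd (p := fun x => 0 < x) measurableSet_Ioi hQ0
  have hR1 : ∀ᵐ ω ∂P, R ω ≤ 1 :=
    hid.ae_snd (p := fun x => x ≤ 1) measurableSet_Iic hQ1
  -- identically distributed inverses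
  have hidinv : IdentDistrib (fun ω => 1 / Q ω) (fun ω => 1 / R ω) P P :=
    hid.comp (measurable_const.div measurable_id)
  have hintR : Integrable (fun ω => 1 / R ω) P := hidinv.integrable_iff.mp hint
  have hindinv : IndepFun (fun ω => 1 / Q ω) (fun ω => 1 / R ω) P :=
    hindep.comp (measurable_const.div measurable_id) (measurable_const.div measurable_id)
  have hintQR : Integrable (fun ω => 1 / (Q ω * R ω)) P := by
    have := hindinv.integrable_mul hint hintR
    refine this.congr (Filter.Eventually.of_forall fun ω => ?_)
    simp [div_mul_div_comm, mul_comm]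
  have hQRint_eq : ∫ ω, 1 / (Q ω * R ω) ∂P = (∫ ω, 1 / Q ω ∂P) ^ 2 := by
    have h1 := hindinv.integral_fun_mul_eq_mul_integral hint.aestronglyMeasurable hintR.aestronglyMeasurable
    have h2 : ∫ ω, 1 / R ω ∂P = ∫ ω, 1 / Q ω ∂P := (hidinv.integral_eq).symm
    calc ∫ ω, 1 / (Q ω * R ω) ∂P = ∫ ω, (1 / Q ω) * (1 / R ω) ∂P := by
          congr 1; ext ω; rw [div_mul_div_comm, one_mul]
      _ = (∫ ω, 1 / Q ω ∂P) * ∫ ω, 1 / R ω ∂P := h1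
      _ = (∫ ω, 1 / Q ω ∂P) ^ 2 := by rw [h2, sq]
  -- convergence of integrals
  have haeQ : ∀ᵐ ω ∂P, 0 < Q ω ∧ Q ω ≤ 1 ∧ 0 < R ω ∧ R ω ≤ 1 := by
    filter_upwards [hQ0, hQ1, hR0, hR1] with ω h1 h2 h3 h4 using ⟨h1, h2, h3, h4⟩
  have htQ : Tendsto (fun k => ∫ ω, (∑ j ∈ Finset.range k, (1 - Q ω) ^ j) ∂P)
      atTop (nhds (∫ ω, 1 / Q ω ∂P)) := by
    refine tendsto_integral_of_dominated_convergence (fun ω => 1 / Q ω)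
      (fun k => ?_) hint (fun k => ?_) ?_
    · exact (Finset.aestronglyMeasurable_fun_sum _ fun j _ =>
        ((measurable_const.sub hQ).pow_const j).aestronglyMeasurable)
    · filter_upwards [haeQ] with ω h using geom_sum_bound h.1 h.2.1 k
    · filter_upwards [haeQ] with ω h using geom_sum_tendsto h.1 h.2.1
  have htQR : Tendsto (fun k => ∫ ω, (∑ j ∈ Finset.range k, (1 - Q ω * R ω) ^ j) ∂P)
      atTop (nhds ((∫ ω, 1 / Q ω ∂P) ^ 2)) := by
    rw [← hQRint_eq]
    refine tendsto_integral_of_dominated_convergence (fun ω => 1 / (Q ω * R ω))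
      (fun k => ?_) hintQR (fun k => ?_) ?_
    · exact (Finset.aestronglyMeasurable_fun_sum _ fun j _ =>
        ((measurable_const.sub (hQ.mul hR)).pow_const j).aestronglyMeasurable)
    · filter_upwards [haeQ] with ω h using
        geom_sum_bound (mul_pos h.1 h.2.2.1)
          (mul_le_one₀ h.2.1 h.2.2.1.le h.2.2.2) k
    · filter_upwards [haeQ] with ω h using
        geom_sum_tendsto (mul_pos h.1 h.2.2.1)
          (mul_le_one₀ h.2.1 h.2.2.1.le h.2.2.2)
  -- take limits in the inequality
  have hmain : 2 * (∫ ω, 1 / Q ω ∂P) ≥ α * (∫ ω, 1 / Q ω ∂P) ^ 2 := by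
    exact le_of_tendsto_of_tendsto (htQR.const_mul α) (htQ.const_mul 2)
      (eventually_atTop.mpr ⟨1, fun k hk => hineq k hk⟩)
  have hE1 : (1:ℝ) ≤ ∫ ω, 1 / Q ω ∂P := by
    have : ∫ ω, (1:ℝ) ∂P ≤ ∫ ω, 1 / Q ω ∂P := by
      refine integral_mono_ae (integrable_const 1) hint ?_
      filter_upwards [hQ0, hQ1] with ω h1 h2
      rw [le_div_iff₀ h1]; linarith
    simpa using this
  have hEpos : (0:ℝ) < ∫ ω, 1 / Q ω ∂P := lt_of_lt_of_le one_pos hE1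
  refine ⟨hmain, ?_⟩
  rw [le_div_iff₀ hEpos]
  have h2 : α * (∫ ω, 1 / Q ω ∂P) * (∫ ω, 1 / Q ω ∂P) ≤ 2 * (∫ ω, 1 / Q ω ∂P) := by
    calc α * (∫ ω, 1 / Q ω ∂P) * (∫ ω, 1 / Q ω ∂P)
        = α * (∫ ω, 1 / Q ω ∂P) ^ 2 := by ring
      _ ≤ 2 * (∫ ω, 1 / Q ω ∂P) := hmain
  exact le_of_mul_le_mul_right h2 hEpos
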